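/- Let R be an integral domain that is not a field, and let P := R ⋊ R^× be its ax+b-monoid: the set R × (R ∖ {0}) with multiplication (b,a)(d,c) = (b + ad, ac). Then for all p, t ∈ P with p ≠ t there exists s ∈ P such that psP ∩ tsP = ∅, where xP := {xy : y ∈ P}. -/

import Mathlib

/-- Multiplication in the `ax+b`-monoid `R ⋊ R^×`: `(b,a)(d,c) = (b + ad, ac)`. -/
def axbMul {R : Type*} [CommRing R] (p q : R × R) : R × R :=
  (p.1 + p.2 * q.1, p.2 * q.2)

/-- The right translate `xP = {xy : y ∈ R ⋊ R^×}` of the `ax+b`-monoid by an element `x`. -/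
def axbCoset {R : Type*} [CommRing R] (x : R × R) : Set (R × R) :=
  {z | ∃ y : R × R, y.2 ≠ 0 ∧ z = axbMul x y}

/-- If `R` is an integral domain that is not a field and `P = R ⋊ R^×` is its
`ax+b`-monoid, then for all `p ≠ t` in `P` there exists `s ∈ P` with `psP ∩ tsP = ∅`. -/
theorem statement13 {R : Type*} [CommRing R] [IsDomain R] (hnf : ¬ IsField R)
    (p t : R × R) (hp : p.2 ≠ 0) (ht : t.2 ≠ 0) (hpt : p ≠ t) :
    ∃ s : R × R, s.2 ≠ 0 ∧ axbCoset (axbMul p s) ∩ axbCoset (axbMul t s) = ∅ := by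
  obtain ⟨c, hc0, hcu⟩ : ∃ c : R, c ≠ 0 ∧ ¬IsUnit c := by
    by_contra h
    push_neg at h
    exact hnf ⟨exists_pair_ne R, mul_comm, fun {a} ha => (h a ha).exists_right_inv⟩
  obtain ⟨s₁, hm⟩ : ∃ s₁ : R, p.1 - t.1 + (p.2 - t.2) * s₁ ≠ 0 := by
    by_cases h1 : p.1 = t.1
    · have h2 : p.2 ≠ t.2 := fun h => hpt (Prod.ext h1 h)
      exact ⟨1, by simpa [h1] using sub_ne_zero.2 h2⟩
    · exact ⟨0, by simpa using sub_ne_zero.2 h1⟩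
  set m := p.1 - t.1 + (p.2 - t.2) * s₁ with hm_def
  refine ⟨(s₁, m * c), mul_ne_zero hm hc0, ?_⟩
  ext w
  simp only [Set.mem_inter_iff, Set.mem_empty_iff_false, iff_false, not_and]
  rintro ⟨y, hy, rfl⟩ ⟨z, hz, hw⟩
  simp only [axbMul, Prod.mk.injEq] at hw
  obtain ⟨h1, h2⟩ := hw
  apply hcu
  have h0 : m * (c * (t.2 * z.1 - p.2 * y.1) - 1) = 0 := by
    rw [hm_def]; linear_combination -h1
  rcases mul_eq_zero.1 h0 with h | h
  · exact absurd h hm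
  · exact IsUnit.of_mul_eq_one (a := c) (t.2 * z.1 - p.2 * y.1) (by linear_combination h)
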